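/- Consider the group G with presentation ⟨ℓ, u | ℓ^N = 1, u³ = ℓ²⟩ where N = α₁α₂ + α₃ is even. Then the center of G contains ℓ², the quotient of G by the central cyclic subgroup generated by ℓ² (of order N/2) is isomorphic to the free product ℤ/2 * ℤ/3, and in particular G is a central extension of ℤ/2 * ℤ/3 by a cyclic group of order N/2. -/

import Mathlib

/-- Relations ℓ^N = 1, u³ = ℓ² on two generators (ℓ = generator 0, u = generator 1). -/
def cubicConicRels (N : ℕ) : Set (FreeGroup (Fin 2)) :=
  {FreeGroup.of 0 ^ N, FreeGroup.of 1 ^ 3 * (FreeGroup.of 0 ^ 2)⁻¹}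

/-- The group G = ⟨ℓ, u | ℓ^N = 1, u³ = ℓ²⟩. -/
def cubicConicGroup (N : ℕ) := PresentedGroup (cubicConicRels N)

instance (N : ℕ) : Group (cubicConicGroup N) := by
  unfold cubicConicGroup; infer_instance

/-- The generator ℓ. -/
def ℓgen (N : ℕ) : cubicConicGroup N := PresentedGroup.of 0

/-- The generator u. -/
def ugen (N : ℕ) : cubicConicGroup N := PresentedGroup.of 1

section Helpers

variable {G : Type*} [Group G]

/-- Lift an element of order dividing `n` to a homomorphism from `Multiplicative (ZMod n)`. -/
def multZModLift (n : ℕ) (g : G) (hg : g ^ n = 1) : Multiplicative (ZMod n) →* G :=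
  MonoidHom.mk'
    (fun x => Additive.toMul (ZMod.lift n ⟨zmultiplesHom (Additive G) (Additive.ofMul g), by
        rw [zmultiplesHom_apply, ← ofMul_zpow, zpow_natCast, hg, ofMul_one]⟩
      (Multiplicative.toAdd x)))
    (fun a b => by rw [toAdd_mul, map_add, toMul_add])

lemma multZModLift_ofAdd_one (n : ℕ) (g : G) (hg : g ^ n = 1) :
    multZModLift n g hg (Multiplicative.ofAdd (1 : ZMod n)) = g := by
  simp only [multZModLift, MonoidHom.mk'_apply, toAdd_ofAdd,
    show (1 : ZMod n) = ((1 : ℤ) : ZMod n) by push_cast; rfl, ZMod.lift_coe]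
  simp

lemma multZMod_hom_ext {n : ℕ} {f g : Multiplicative (ZMod n) →* G}
    (h : f (Multiplicative.ofAdd (1 : ZMod n)) = g (Multiplicative.ofAdd (1 : ZMod n))) :
    f = g := by
  refine MonoidHom.ext fun x => ?_
  obtain ⟨m, hm⟩ := ZMod.intCast_surjective (Multiplicative.toAdd x)
  have hx : x = Multiplicative.ofAdd (1 : ZMod n) ^ m := by
    rw [← ofAdd_zsmul,
      show m • (1 : ZMod n) = ((m : ℤ) : ZMod n) by rw [zsmul_eq_mul, mul_one], hm, ofAdd_toAdd]
  rw [hx, map_zpow, map_zpow, h]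

end Helpers

section Main

variable (N : ℕ)

lemma rel_one : ℓgen N ^ N = 1 := by
  have h : ((FreeGroup.of 0 : FreeGroup (Fin 2)) ^ N)
      ∈ Subgroup.normalClosure (cubicConicRels N) :=
    Subgroup.subset_normalClosure (Set.mem_insert _ _)
  show (PresentedGroup.of (rels := cubicConicRels N) 0) ^ N = 1
  rw [show (PresentedGroup.of (rels := cubicConicRels N) 0) ^ N
      = PresentedGroup.mk (cubicConicRels N) (FreeGroup.of 0 ^ N) by
    rw [map_pow]; rfl]
  exact (QuotientGroup.eq_one_iff _).mpr h

lemma rel_two : ugen N ^ 3 = ℓgen N ^ 2 := by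
  have h : ((FreeGroup.of 1 : FreeGroup (Fin 2)) ^ 3 * (FreeGroup.of 0 ^ 2)⁻¹)
      ∈ Subgroup.normalClosure (cubicConicRels N) :=
    Subgroup.subset_normalClosure (Set.mem_insert_of_mem _ rfl)
  have h2 : (PresentedGroup.mk (cubicConicRels N))
      (FreeGroup.of 1 ^ 3 * (FreeGroup.of 0 ^ 2)⁻¹) = 1 :=
    (QuotientGroup.eq_one_iff _).mpr h
  rw [map_mul, map_inv, map_pow, map_pow] at h2
  have := mul_eq_one_iff_eq_inv.mp h2
  rw [inv_inv] at this
  exact this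

lemma lgen_sq_central : ℓgen N ^ 2 ∈ Subgroup.center (cubicConicGroup N) := by
  rw [Subgroup.mem_center_iff]
  intro g
  have hg : g ∈ Subgroup.centralizer {ℓgen N ^ 2} := by
    apply PresentedGroup.generated_by
    intro j
    refine (Subgroup.mem_centralizer_iff (G := cubicConicGroup N)).mpr ?_
    intro h hh
    rw [Set.mem_singleton_iff] at hh
    subst hh
    fin_cases j
    · exact ((Commute.refl (ℓgen N)).pow_left 2)
    · rw [← rel_two]
      exact ((Commute.refl (ugen N)).pow_left 3)
  exact (Subgroup.mem_centralizer_iff.mp hg _ (Set.mem_singleton _)).symm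

lemma zpowers_normal : (Subgroup.zpowers (ℓgen N ^ 2)).Normal := by
  constructor
  intro n hn g
  obtain ⟨k, hk⟩ := Subgroup.mem_zpowers_iff.mp hn
  have hc : (ℓgen N ^ 2) ^ k ∈ Subgroup.center (cubicConicGroup N) :=
    Subgroup.zpow_mem _ (lgen_sq_central N) k
  have hcg : g * (ℓgen N ^ 2) ^ k = (ℓgen N ^ 2) ^ k * g := Subgroup.mem_center_iff.mp hc g
  rw [← hk, hcg, mul_assoc, mul_inv_cancel, mul_one]
  exact Subgroup.zpow_mem _ (Subgroup.mem_zpowers _) k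

lemma nc_eq_zpowers :
    Subgroup.normalClosure {ℓgen N ^ 2} = Subgroup.zpowers (ℓgen N ^ 2) := by
  haveI := zpowers_normal N
  apply le_antisymm
  · exact Subgroup.normalClosure_le_normal
      (Set.singleton_subset_iff.mpr (Subgroup.mem_zpowers _))
  · exact Subgroup.zpowers_le.mpr
      (Subgroup.subset_normalClosure (Set.mem_singleton _))

/-- The abelianization detector `ℓ ↦ 3, u ↦ 2` into `ZMod (3N)`. -/
lemma delta_rels :
    ∀ r ∈ cubicConicRels N, FreeGroup.lift
      (![Multiplicative.ofAdd (3 : ZMod (3 * N)), Multiplicative.ofAdd (2 : ZMod (3 * N))] :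
        Fin 2 → Multiplicative (ZMod (3 * N))) r = 1 := by
  intro r hr
  rcases hr with rfl | hr
  · rw [map_pow, FreeGroup.lift_apply_of]
    show Multiplicative.ofAdd (3 : ZMod (3 * N)) ^ N = 1
    rw [← ofAdd_nsmul, nsmul_eq_mul]
    have : ((N : ZMod (3 * N)) * 3) = (((3 * N : ℕ) : ZMod (3 * N))) := by push_cast; ring
    rw [this, ZMod.natCast_self]
    rfl
  · rw [Set.mem_singleton_iff] at hr
    subst hr
    rw [map_mul, map_inv, map_pow, map_pow, FreeGroup.lift_apply_of, FreeGroup.lift_apply_of]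
    show Multiplicative.ofAdd (2 : ZMod (3 * N)) ^ 3 *
      (Multiplicative.ofAdd (3 : ZMod (3 * N)) ^ 2)⁻¹ = 1
    rw [← ofAdd_nsmul, ← ofAdd_nsmul, ← ofAdd_neg, ← ofAdd_add]
    have : (3 : ℕ) • (2 : ZMod (3 * N)) + -((2 : ℕ) • (3 : ZMod (3 * N))) = 0 := by
      rw [nsmul_eq_mul, nsmul_eq_mul]; push_cast; ring
    rw [this]
    rfl

lemma orderOf_lgen_sq (hN : Even N) (hpos : 0 < N) : orderOf (ℓgen N ^ 2) = N / 2 := by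
  obtain ⟨k, hk⟩ := hN
  have hNk : N = 2 * k := by omega
  have hk2 : N / 2 = k := by omega
  have hkpos : 0 < k := by omega
  -- upper bound
  have hup : (ℓgen N ^ 2) ^ (N / 2) = 1 := by
    rw [← pow_mul, show 2 * (N / 2) = N by omega, rel_one]
  -- lower bound via δ
  set δ := PresentedGroup.toGroup (delta_rels N) with hδ
  have himg0 : δ (ℓgen N) = Multiplicative.ofAdd (3 : ZMod (3 * N)) :=
    PresentedGroup.toGroup.of (delta_rels N)
  have himg : δ (ℓgen N ^ 2) = Multiplicative.ofAdd (6 : ZMod (3 * N)) := by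
    rw [show δ (ℓgen N ^ 2) = δ (ℓgen N) ^ 2 from map_pow δ (ℓgen N) 2, himg0, ← ofAdd_nsmul]
    norm_num [nsmul_eq_mul]
  have h6 : (6 : ZMod (3 * N)) = ((6 : ℕ) : ZMod (3 * N)) := by push_cast; rfl
  have hord : orderOf (δ (ℓgen N ^ 2)) = N / 2 := by
    rw [himg, orderOf_ofAdd_eq_addOrderOf, h6,
      ZMod.addOrderOf_coe 6 (by positivity)]
    have hgcd : Nat.gcd (3 * N) 6 = 6 := Nat.gcd_eq_right (by omega)
    rw [hgcd]
    omega
  have hdvd1 : orderOf (ℓgen N ^ 2) ∣ N / 2 := orderOf_dvd_of_pow_eq_one hup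
  have hdvd2 : N / 2 ∣ orderOf (ℓgen N ^ 2) := hord ▸ orderOf_map_dvd δ _
  exact Nat.dvd_antisymm hdvd1 hdvd2

/-- The target free product. -/
abbrev H23 := Monoid.Coprod (Multiplicative (ZMod 2)) (Multiplicative (ZMod 3))

lemma phi_rels (hN : Even N) :
    ∀ r ∈ cubicConicRels N, FreeGroup.lift
      (![Monoid.Coprod.inl (Multiplicative.ofAdd (1 : ZMod 2)),
         Monoid.Coprod.inr (Multiplicative.ofAdd (1 : ZMod 3))] : Fin 2 → H23) r = 1 := by
  intro r hr
  have h2 : Multiplicative.ofAdd (1 : ZMod 2) ^ N = 1 := by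
    rw [← ofAdd_nsmul, nsmul_eq_mul, mul_one]
    rw [show ((N : ZMod 2)) = 0 from
      (ZMod.natCast_eq_zero_iff N 2).mpr hN.two_dvd]
    rfl
  have h3 : Multiplicative.ofAdd (1 : ZMod 3) ^ 3 = 1 := by decide
  have h2' : Multiplicative.ofAdd (1 : ZMod 2) ^ 2 = 1 := by decide
  rcases hr with rfl | hr
  · rw [map_pow, FreeGroup.lift_apply_of]
    show Monoid.Coprod.inl (Multiplicative.ofAdd (1 : ZMod 2)) ^ N = 1
    rw [← map_pow (Monoid.Coprod.inl : Multiplicative (ZMod 2) →* H23), h2, map_one]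
  · rw [Set.mem_singleton_iff] at hr
    subst hr
    rw [map_mul, map_inv, map_pow, map_pow, FreeGroup.lift_apply_of, FreeGroup.lift_apply_of]
    show Monoid.Coprod.inr (Multiplicative.ofAdd (1 : ZMod 3)) ^ 3 *
      (Monoid.Coprod.inl (Multiplicative.ofAdd (1 : ZMod 2)) ^ 2)⁻¹ = 1
    rw [← map_pow (Monoid.Coprod.inr : Multiplicative (ZMod 3) →* H23),
      ← map_pow (Monoid.Coprod.inl : Multiplicative (ZMod 2) →* H23),
      h3, h2', map_one, map_one, inv_one, mul_one]

lemma quotient_iso (hN : Even N) :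
    Nonempty ((cubicConicGroup N ⧸ Subgroup.normalClosure {ℓgen N ^ 2}) ≃* H23) := by
  set K := Subgroup.normalClosure {ℓgen N ^ 2} with hK
  set φ : cubicConicGroup N →* H23 := PresentedGroup.toGroup (phi_rels N hN) with hφ
  have hφl : φ (ℓgen N) = Monoid.Coprod.inl (Multiplicative.ofAdd (1 : ZMod 2)) :=
    PresentedGroup.toGroup.of (phi_rels N hN)
  have hφu : φ (ugen N) = Monoid.Coprod.inr (Multiplicative.ofAdd (1 : ZMod 3)) :=
    PresentedGroup.toGroup.of (phi_rels N hN)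
  have hker : ∀ x ∈ K, φ x = 1 := by
    have : K ≤ φ.ker := by
      apply Subgroup.normalClosure_le_normal
      rw [Set.singleton_subset_iff]
      show φ (ℓgen N ^ 2) = 1
      rw [map_pow, hφl, ← map_pow (Monoid.Coprod.inl : Multiplicative (ZMod 2) →* H23)]
      rw [show Multiplicative.ofAdd (1 : ZMod 2) ^ 2 = 1 by decide, map_one]
    exact fun x hx => this hx
  set ψ : (cubicConicGroup N ⧸ K) →* H23 := QuotientGroup.lift K φ hker with hψ
  -- images of generators in the quotient
  set L : cubicConicGroup N ⧸ K := QuotientGroup.mk' K (ℓgen N) with hL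
  set U : cubicConicGroup N ⧸ K := QuotientGroup.mk' K (ugen N) with hU
  have hz : (QuotientGroup.mk' K) (ℓgen N ^ 2) = 1 :=
    (QuotientGroup.eq_one_iff _).mpr (Subgroup.subset_normalClosure (Set.mem_singleton _))
  have hL2 : L ^ 2 = 1 := by rw [hL, ← map_pow]; exact hz
  have hU3 : U ^ 3 = 1 := by rw [hU, ← map_pow, rel_two N]; exact hz
  set χ : H23 →* (cubicConicGroup N ⧸ K) :=
    Monoid.Coprod.lift (multZModLift 2 L hL2) (multZModLift 3 U hU3) with hχ
  have hχinl : χ (Monoid.Coprod.inl (Multiplicative.ofAdd (1 : ZMod 2))) = L := by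
    rw [hχ, Monoid.Coprod.lift_apply_inl, multZModLift_ofAdd_one]
  have hχinr : χ (Monoid.Coprod.inr (Multiplicative.ofAdd (1 : ZMod 3))) = U := by
    rw [hχ, Monoid.Coprod.lift_apply_inr, multZModLift_ofAdd_one]
  have h1 : χ.comp ψ = MonoidHom.id _ := by
    apply QuotientGroup.monoidHom_ext
    apply PresentedGroup.ext (rels := cubicConicRels N)
    intro x
    fin_cases x
    · show χ (ψ ((QuotientGroup.mk' K) (ℓgen N))) = (QuotientGroup.mk' K) (ℓgen N)
      have hr : ψ ((QuotientGroup.mk' K) (ℓgen N)) = φ (ℓgen N) := rfl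
      rw [hr, hφl, hχinl]
    · show χ (ψ ((QuotientGroup.mk' K) (ugen N))) = (QuotientGroup.mk' K) (ugen N)
      have hr : ψ ((QuotientGroup.mk' K) (ugen N)) = φ (ugen N) := rfl
      rw [hr, hφu, hχinr]
  have h2 : ψ.comp χ = MonoidHom.id _ := by
    apply Monoid.Coprod.hom_ext
    · apply multZMod_hom_ext
      show ψ (χ (Monoid.Coprod.inl (Multiplicative.ofAdd (1 : ZMod 2)))) =
        Monoid.Coprod.inl (Multiplicative.ofAdd (1 : ZMod 2))
      rw [hχinl, hL]
      exact hφl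
    · apply multZMod_hom_ext
      show ψ (χ (Monoid.Coprod.inr (Multiplicative.ofAdd (1 : ZMod 3)))) =
        Monoid.Coprod.inr (Multiplicative.ofAdd (1 : ZMod 3))
      rw [hχinr, hU]
      exact hφu
  exact ⟨MonoidHom.toMulEquiv ψ χ h1 h2⟩

end Main

/-- In G = ⟨ℓ, u | ℓ^N = 1, u³ = ℓ²⟩ with N even, ℓ² is central, the (normal) subgroup it
generates is cyclic of order N/2, and the quotient of G by it is isomorphic to the free
product ℤ/2 * ℤ/3; in particular G is a central extension of ℤ/2 * ℤ/3 by a cyclic group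
of order N/2. -/
theorem cubicConicGroup_central_extension (N : ℕ) (hN : Even N) (hpos : 0 < N) :
    (ℓgen N ^ 2 ∈ Subgroup.center (cubicConicGroup N)) ∧
    (Nat.card (Subgroup.normalClosure {ℓgen N ^ 2} : Subgroup (cubicConicGroup N)) = N / 2) ∧
    IsCyclic (Subgroup.normalClosure {ℓgen N ^ 2} : Subgroup (cubicConicGroup N)) ∧
    Nonempty ((cubicConicGroup N ⧸ Subgroup.normalClosure {ℓgen N ^ 2}) ≃*
      Monoid.Coprod (Multiplicative (ZMod 2)) (Multiplicative (ZMod 3))) := by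
  refine ⟨lgen_sq_central N, ?_, ?_, quotient_iso N hN⟩
  · rw [nc_eq_zpowers, Nat.card_zpowers, orderOf_lgen_sq N hN hpos]
  · rw [nc_eq_zpowers]
    constructor
    refine ⟨⟨ℓgen N ^ 2, Subgroup.mem_zpowers _⟩, ?_⟩
    rintro ⟨x, hx⟩
    obtain ⟨k, hk⟩ := Subgroup.mem_zpowers_iff.mp hx
    exact ⟨k, Subtype.ext (by simpa using hk)⟩
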